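/- Let f be monotone submodular with f(∅) = 0, and let O* ⊆ N with |O*| = r ≥ 1. If A ⊆ N is a uniformly random subset of N of size k ≤ r, then E[f(O* \ A)] ≥ (1 − k/r)·f(O*). -/

import Mathlib

open Finset

/-- Telescoping plus submodularity: the total loss of removing each element of `T ⊆ S`
individually is at most the loss of removing all of `T`. -/
lemma stmt5_sum_removal_le {α : Type*} [DecidableEq α]
    (f : Finset α → ℝ)
    (hsub : ∀ A B : Finset α, A ⊆ B → ∀ x,
      f (insert x B) - f B ≤ f (insert x A) - f A) :
    ∀ (T S : Finset α), T ⊆ S →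
      ∑ x ∈ T, (f S - f (S.erase x)) ≤ f S - f (S \ T) := by
  intro T
  induction T using Finset.induction_on with
  | empty => intro S _; simp
  | @insert a T' ha ih =>
    intro S hTS
    have haS : a ∈ S := hTS (mem_insert_self a T')
    have hT'S : T' ⊆ S := (Finset.subset_insert a T').trans hTS
    rw [Finset.sum_insert ha]
    have h1 := ih S hT'S
    have ha' : a ∈ S \ T' := mem_sdiff.mpr ⟨haS, ha⟩
    have key : f S - f (S.erase a) ≤ f (S \ T') - f (S \ insert a T') := by
      have h2 := hsub ((S \ T').erase a) (S.erase a) (by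
        intro x hx
        rcases mem_erase.mp hx with ⟨hxa, hxS⟩
        exact mem_erase.mpr ⟨hxa, (mem_sdiff.mp hxS).1⟩) a
      rw [Finset.insert_erase haS, Finset.insert_erase ha'] at h2
      have hrw : S \ insert a T' = (S \ T').erase a := Finset.sdiff_insert S T' a
      rw [hrw]
      linarith
    linarith

/-- For monotone submodular `f` with `f ∅ = 0`, `O* ⊆ N` with `|O*| = r ≥ 1`,
and `A` a uniformly random `k`-subset of `N` with `k ≤ r`, we have
`E[f(O* \ A)] ≥ (1 - k/r) · f(O*)`. -/
theorem stmt_5 {α : Type*} [DecidableEq α] (N : Finset α)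
    (f : Finset α → ℝ) (hf0 : ∀ S, 0 ≤ f S) (hempty : f ∅ = 0)
    (hmono : ∀ A B : Finset α, A ⊆ B → f A ≤ f B)
    (hsub : ∀ A B : Finset α, A ⊆ B → ∀ x,
      f (insert x B) - f B ≤ f (insert x A) - f A)
    (Ostar : Finset α) (hO : Ostar ⊆ N) (r k : ℕ)
    (hr : Ostar.card = r) (hr1 : 1 ≤ r) (hk : k ≤ r) :
    ((N.card.choose k : ℝ))⁻¹ * ∑ A ∈ N.powersetCard k, f (Ostar \ A) ≥
      (1 - (k : ℝ) / r) * f Ostar := by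
  classical
  set n := N.card with hn
  have hrn : r ≤ n := hr ▸ Finset.card_le_card hO
  have hfO : 0 ≤ f Ostar := hf0 _
  -- key one-step inequality
  have key : ∀ m : ℕ, m + 1 ≤ n →
      ((n - (m+1) : ℕ) : ℝ) * ∑ A ∈ N.powersetCard m, f (Ostar \ A)
        ≤ ((m+1 : ℕ) : ℝ) * ∑ A ∈ N.powersetCard (m+1), f (Ostar \ A) := by
    intro m hm
    have I1 : ∑ A ∈ N.powersetCard m, ∑ _x ∈ N \ A, f (Ostar \ A)
        = ((n - m : ℕ) : ℝ) * ∑ A ∈ N.powersetCard m, f (Ostar \ A) := by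
      rw [Finset.mul_sum]
      apply Finset.sum_congr rfl
      intro A hA
      rcases (mem_powersetCard.mp hA) with ⟨hAN, hAc⟩
      rw [Finset.sum_const, Finset.card_sdiff_of_subset hAN, hAc, nsmul_eq_mul, ← hn]
    have I2 : ∑ A ∈ N.powersetCard m, ∑ x ∈ N \ A, f (Ostar \ insert x A)
        = ((m+1 : ℕ) : ℝ) * ∑ B ∈ N.powersetCard (m+1), f (Ostar \ B) := by
      have hB : ∑ B ∈ N.powersetCard (m+1), ∑ _x ∈ B, f (Ostar \ B)
          = ((m+1:ℕ):ℝ) * ∑ B ∈ N.powersetCard (m+1), f (Ostar \ B) := by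
        rw [Finset.mul_sum]
        apply Finset.sum_congr rfl
        intro B hB
        rw [Finset.sum_const, (mem_powersetCard.mp hB).2, nsmul_eq_mul]
      rw [← hB, Finset.sum_sigma', Finset.sum_sigma']
      apply Finset.sum_nbij'
        (i := fun p : Σ _ : Finset α, α => (⟨insert p.2 p.1, p.2⟩ : Σ _ : Finset α, α))
        (j := fun p : Σ _ : Finset α, α => (⟨p.1.erase p.2, p.2⟩ : Σ _ : Finset α, α))
      · rintro ⟨A, x⟩ hp
        rcases Finset.mem_sigma.mp hp with ⟨hA, hx⟩
        rcases mem_powersetCard.mp hA with ⟨hAN, hAc⟩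
        rcases mem_sdiff.mp hx with ⟨hxN, hxA⟩
        refine Finset.mem_sigma.mpr ⟨mem_powersetCard.mpr ⟨?_, ?_⟩, ?_⟩
        · exact Finset.insert_subset hxN hAN
        · rw [Finset.card_insert_of_notMem hxA, hAc]
        · exact mem_insert_self _ _
      · rintro ⟨B, x⟩ hp
        rcases Finset.mem_sigma.mp hp with ⟨hB, hx⟩
        rcases mem_powersetCard.mp hB with ⟨hBN, hBc⟩
        refine Finset.mem_sigma.mpr ⟨mem_powersetCard.mpr ⟨?_, ?_⟩, ?_⟩
        · exact (Finset.erase_subset _ _).trans hBN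
        · rw [Finset.card_erase_of_mem hx, hBc]
          omega
        · exact mem_sdiff.mpr ⟨hBN hx, Finset.notMem_erase _ _⟩
      · rintro ⟨A, x⟩ hp
        rcases Finset.mem_sigma.mp hp with ⟨_, hx⟩
        rcases mem_sdiff.mp hx with ⟨_, hxA⟩
        simp [Finset.erase_insert hxA]
      · rintro ⟨B, x⟩ hp
        rcases Finset.mem_sigma.mp hp with ⟨_, hx⟩
        simp [Finset.insert_erase hx]
      · rintro ⟨A, x⟩ _
        rfl
    have per : ∀ A ∈ N.powersetCard m,
        ∑ x ∈ N \ A, (f (Ostar \ A) - f (Ostar \ insert x A)) ≤ f (Ostar \ A) := by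
      intro A hA
      have hsub' : Ostar \ A ⊆ N \ A :=
        Finset.sdiff_subset_sdiff hO (Finset.Subset.refl A)
      have heq : ∑ x ∈ Ostar \ A, (f (Ostar \ A) - f (Ostar \ insert x A))
          = ∑ x ∈ N \ A, (f (Ostar \ A) - f (Ostar \ insert x A)) := by
        apply Finset.sum_subset hsub'
        intro x _hxN hxO
        have hxOs : x ∉ Ostar ∨ x ∈ A := by
          by_contra hcon
          push_neg at hcon
          exact hxO (mem_sdiff.mpr ⟨hcon.1, hcon.2⟩)
        have : Ostar \ insert x A = Ostar \ A := by
          ext y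
          simp only [mem_sdiff, mem_insert]
          constructor
          · rintro ⟨hy, hy2⟩; exact ⟨hy, fun h => hy2 (Or.inr h)⟩
          · rintro ⟨hy, hy2⟩
            refine ⟨hy, ?_⟩
            rintro (rfl | h)
            · rcases hxOs with h' | h'
              · exact h' hy
              · exact hy2 h'
            · exact hy2 h
        rw [this]
        ring
      rw [← heq]
      have heq2 : ∑ x ∈ Ostar \ A, (f (Ostar \ A) - f (Ostar \ insert x A))
          = ∑ x ∈ Ostar \ A, (f (Ostar \ A) - f ((Ostar \ A).erase x)) := by
        apply Finset.sum_congr rfl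
        intro x _
        rw [Finset.sdiff_insert]
      rw [heq2]
      have := stmt5_sum_removal_le f hsub (Ostar \ A) (Ostar \ A) (Finset.Subset.refl _)
      rw [Finset.sdiff_self, hempty] at this
      linarith
    have hsumper : ∑ A ∈ N.powersetCard m,
        ∑ x ∈ N \ A, (f (Ostar \ A) - f (Ostar \ insert x A))
        ≤ ∑ A ∈ N.powersetCard m, f (Ostar \ A) := Finset.sum_le_sum per
    have hsplit : ∑ A ∈ N.powersetCard m,
        ∑ x ∈ N \ A, (f (Ostar \ A) - f (Ostar \ insert x A))
        = (∑ A ∈ N.powersetCard m, ∑ _x ∈ N \ A, f (Ostar \ A))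
          - ∑ A ∈ N.powersetCard m, ∑ x ∈ N \ A, f (Ostar \ insert x A) := by
      rw [← Finset.sum_sub_distrib]
      apply Finset.sum_congr rfl
      intro A _
      rw [← Finset.sum_sub_distrib]
    rw [hsplit, I1, I2] at hsumper
    have hcast : ((n - (m+1) : ℕ) : ℝ) = ((n - m : ℕ) : ℝ) - 1 := by
      have h1 : m ≤ n := le_of_lt (Nat.lt_of_lt_of_le (Nat.lt_succ_self m) hm)
      have : n - (m+1) + 1 = n - m := by omega
      push_cast [← this]
      ring
    rw [hcast]
    linarith
  -- main induction
  have main : ∀ m, m ≤ n → ((n - m : ℕ) : ℝ) * (n.choose m : ℝ) * f Ostar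
      ≤ (n : ℝ) * ∑ A ∈ N.powersetCard m, f (Ostar \ A) := by
    intro m
    induction m with
    | zero =>
      intro _
      simp only [Nat.sub_zero, Nat.choose_zero_right, Nat.cast_one, mul_one,
        Finset.powersetCard_zero, Finset.sum_singleton, Finset.sdiff_empty]
      exact le_rfl
    | succ m ih =>
      intro hm1
      have hm : m ≤ n := le_of_lt (Nat.lt_of_lt_of_le (Nat.lt_succ_self m) hm1)
      have h1 := ih hm
      have hkey := key m hm1
      have hch : (n.choose (m+1) : ℝ) * ((m+1 : ℕ) : ℝ)
          = (n.choose m : ℝ) * ((n - m : ℕ) : ℝ) := by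
        exact_mod_cast congrArg (Nat.cast (R := ℝ)) (Nat.choose_succ_right_eq n m)
      have hnn : (0:ℝ) ≤ ((n - (m+1) : ℕ) : ℝ) := Nat.cast_nonneg _
      have hnpos : (0:ℝ) ≤ (n:ℝ) := Nat.cast_nonneg _
      have h2 : ((n - (m+1) : ℕ) : ℝ) * (((n - m : ℕ) : ℝ) * (n.choose m : ℝ) * f Ostar)
          ≤ ((n - (m+1) : ℕ) : ℝ) * ((n : ℝ) * ∑ A ∈ N.powersetCard m, f (Ostar \ A)) :=
        mul_le_mul_of_nonneg_left h1 hnn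
      have h3 : (n:ℝ) * (((n - (m+1) : ℕ) : ℝ) * ∑ A ∈ N.powersetCard m, f (Ostar \ A))
          ≤ (n:ℝ) * (((m+1 : ℕ) : ℝ) * ∑ A ∈ N.powersetCard (m+1), f (Ostar \ A)) :=
        mul_le_mul_of_nonneg_left hkey hnpos
      have hm1pos : (0:ℝ) < ((m+1 : ℕ) : ℝ) := by positivity
      rw [← mul_le_mul_iff_right₀ hm1pos]
      calc ((m+1:ℕ):ℝ) * (((n - (m+1) : ℕ) : ℝ) * (n.choose (m+1) : ℝ) * f Ostar)
          = ((n - (m+1) : ℕ) : ℝ) * ((n.choose (m+1) : ℝ) * ((m+1:ℕ):ℝ)) * f Ostar := by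
            ring
        _ = ((n - (m+1) : ℕ) : ℝ) * (((n - m : ℕ) : ℝ) * (n.choose m : ℝ) * f Ostar) := by
            rw [hch]; ring
        _ ≤ ((n - (m+1) : ℕ) : ℝ) * ((n : ℝ) * ∑ A ∈ N.powersetCard m, f (Ostar \ A)) := h2
        _ = (n:ℝ) * (((n - (m+1) : ℕ) : ℝ) * ∑ A ∈ N.powersetCard m, f (Ostar \ A)) := by
            ring
        _ ≤ (n:ℝ) * (((m+1 : ℕ) : ℝ) * ∑ A ∈ N.powersetCard (m+1), f (Ostar \ A)) := h3
        _ = ((m+1:ℕ):ℝ) * ((n:ℝ) * ∑ A ∈ N.powersetCard (m+1), f (Ostar \ A)) := by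
            ring
  -- conclude
  have hkn : k ≤ n := hk.trans hrn
  have hmain := main k hkn
  have hnpos : (0:ℝ) < (n:ℝ) := by
    have : 0 < n := lt_of_lt_of_le hr1 hrn
    exact_mod_cast this
  have hrpos : (0:ℝ) < (r:ℝ) := by exact_mod_cast hr1
  have hckpos : (0:ℝ) < (n.choose k : ℝ) := by
    exact_mod_cast Nat.choose_pos hkn
  have hcast : ((n - k : ℕ) : ℝ) = (n:ℝ) - (k:ℝ) := by
    push_cast [Nat.cast_sub hkn]; ring
  have h4 : (1 - (k:ℝ)/r) ≤ ((n - k : ℕ):ℝ) / n := by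
    rw [hcast, sub_div, div_self (ne_of_gt hnpos)]
    have : (k:ℝ)/n ≤ (k:ℝ)/r := by
      apply div_le_div_of_nonneg_left (Nat.cast_nonneg k) hrpos
      exact_mod_cast hrn
    linarith
  have h5 : (1 - (k:ℝ)/r) * f Ostar ≤ (((n - k : ℕ):ℝ) / n) * f Ostar :=
    mul_le_mul_of_nonneg_right h4 hfO
  have h6 : (((n - k : ℕ):ℝ) / n) * f Ostar
      ≤ (n.choose k : ℝ)⁻¹ * ∑ A ∈ N.powersetCard k, f (Ostar \ A) := by
    rw [div_mul_eq_mul_div, inv_mul_eq_div, div_le_div_iff₀ hnpos hckpos]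
    calc ((n - k : ℕ):ℝ) * f Ostar * (n.choose k : ℝ)
        = ((n - k : ℕ):ℝ) * (n.choose k : ℝ) * f Ostar := by ring
      _ ≤ (n:ℝ) * ∑ A ∈ N.powersetCard k, f (Ostar \ A) := hmain
      _ = (∑ A ∈ N.powersetCard k, f (Ostar \ A)) * (n:ℝ) := by ring
  exact le_trans h5 h6
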